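/- Let a, c > 0, b, d ≥ 0, P_max > 0, and let r₁ satisfy 0 ≤ r₁ ≤ log₂(1 + a·P_max/(1 + b·P_max)). Then among all (P₁, P₂) ∈ [0, P_max]² with log₂(1 + a·P₁/(1 + b·P₂)) = r₁, the rate R₂(P₁, P₂) = log₂(1 + c·P₂/(1 + d·P₁)) is maximized by taking P₂ = P_max (and P₁ = (1/a)(1 + b·P_max)(2^{r₁} − 1)), giving maximal value log₂(1 + c·P_max/(1 + (d/a)(1 + b·P_max)(2^{r₁} − 1))). -/

import Mathlib

open Real Set

theorem interval1_frontier (a b c d Pmax : ℝ)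
    (ha : 0 < a) (hc : 0 < c) (hb : 0 ≤ b) (hd : 0 ≤ d) (hP : 0 < Pmax)
    (r₁ : ℝ) (hr₁ : 0 ≤ r₁)
    (hr₂ : r₁ ≤ Real.logb 2 (1 + a * Pmax / (1 + b * Pmax))) :
    Real.logb 2
        (1 + a * ((1 / a) * (1 + b * Pmax) * ((2:ℝ) ^ r₁ - 1)) / (1 + b * Pmax)) = r₁
    ∧ (1 / a) * (1 + b * Pmax) * ((2:ℝ) ^ r₁ - 1) ∈ Icc (0:ℝ) Pmax
    ∧ Real.logb 2
        (1 + c * Pmax /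
          (1 + d * ((1 / a) * (1 + b * Pmax) * ((2:ℝ) ^ r₁ - 1))))
        = Real.logb 2
            (1 + c * Pmax / (1 + (d / a) * (1 + b * Pmax) * ((2:ℝ) ^ r₁ - 1)))
    ∧ ∀ P₁ ∈ Icc (0:ℝ) Pmax, ∀ P₂ ∈ Icc (0:ℝ) Pmax,
        Real.logb 2 (1 + a * P₁ / (1 + b * P₂)) = r₁ →
        Real.logb 2 (1 + c * P₂ / (1 + d * P₁))
          ≤ Real.logb 2
              (1 + c * Pmax / (1 + (d / a) * (1 + b * Pmax) * ((2:ℝ) ^ r₁ - 1))) := by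
  have hBP : (0:ℝ) < 1 + b * Pmax := by positivity
  have ht0 : (1:ℝ) ≤ (2:ℝ) ^ r₁ := Real.one_le_rpow (by norm_num) hr₁
  have ht : (0:ℝ) ≤ (2:ℝ) ^ r₁ - 1 := by linarith
  have hXpos : (0:ℝ) < 1 + a * Pmax / (1 + b * Pmax) := by positivity
  have hup : (2:ℝ) ^ r₁ ≤ 1 + a * Pmax / (1 + b * Pmax) := by
    calc (2:ℝ) ^ r₁ ≤ (2:ℝ) ^ Real.logb 2 (1 + a * Pmax / (1 + b * Pmax)) :=
          Real.rpow_le_rpow_of_exponent_le one_le_two hr₂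
      _ = 1 + a * Pmax / (1 + b * Pmax) :=
          Real.rpow_logb (by norm_num) (by norm_num) hXpos
  have hsimp : 1 + a * ((1 / a) * (1 + b * Pmax) * ((2:ℝ) ^ r₁ - 1)) / (1 + b * Pmax)
      = (2:ℝ) ^ r₁ := by field_simp; ring
  have h1 : (1 + b * Pmax) * ((2:ℝ) ^ r₁ - 1) ≤ a * Pmax := by
    have h2 : ((2:ℝ) ^ r₁ - 1) * (1 + b * Pmax) ≤ a * Pmax :=
      (le_div_iff₀ hBP).mp (by linarith)
    linarith [mul_comm ((2:ℝ) ^ r₁ - 1) (1 + b * Pmax)]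
  refine ⟨?_, ⟨?_, ?_⟩, ?_, ?_⟩
  · rw [hsimp, Real.logb_rpow (by norm_num) (by norm_num)]
  · positivity
  · rw [show (1 / a) * (1 + b * Pmax) * ((2:ℝ) ^ r₁ - 1)
        = ((1 + b * Pmax) * ((2:ℝ) ^ r₁ - 1)) / a from by ring,
      div_le_iff₀ ha]
    nlinarith
  · congr 2
    ring
  · intro P₁ hP₁ P₂ hP₂ hcon
    have hBP2 : (0:ℝ) < 1 + b * P₂ := by
      have := hP₂.1; positivity
    have hXpos2 : (0:ℝ) < 1 + a * P₁ / (1 + b * P₂) := by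
      have h1 := hP₁.1
      positivity
    have hX : 1 + a * P₁ / (1 + b * P₂) = (2:ℝ) ^ r₁ := by
      rw [← hcon, Real.rpow_logb (by norm_num) (by norm_num) hXpos2]
    have hP1eq : a * P₁ = (1 + b * P₂) * ((2:ℝ) ^ r₁ - 1) := by
      have h3 : a * P₁ / (1 + b * P₂) = (2:ℝ) ^ r₁ - 1 := by linarith
      field_simp at h3
      linarith
    have hu : 0 ≤ d / a := div_nonneg hd ha.le
    have hdP1 : d * P₁ = (d / a) * ((1 + b * P₂) * ((2:ℝ) ^ r₁ - 1)) := by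
      have h4 : d * P₁ = d / a * (a * P₁) := by field_simp
      rw [h4, hP1eq]
    have hD1 : (0:ℝ) < 1 + d * P₁ := by
      have := mul_nonneg hd hP₁.1; linarith
    have hD2 : (0:ℝ) < 1 + (d / a) * (1 + b * Pmax) * ((2:ℝ) ^ r₁ - 1) := by
      have := mul_nonneg (mul_nonneg hu hBP.le) ht; linarith
    apply Real.logb_le_logb_of_le one_lt_two (by
      have h5 := div_nonneg (mul_nonneg hc.le hP₂.1) hD1.le; linarith)
    have hkey : c * P₂ / (1 + d * P₁)
        ≤ c * Pmax / (1 + (d / a) * (1 + b * Pmax) * ((2:ℝ) ^ r₁ - 1)) := by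
      rw [hdP1] at hD1 ⊢
      rw [div_le_div_iff₀ hD1 hD2]
      nlinarith [mul_nonneg (mul_nonneg hc.le (sub_nonneg.mpr hP₂.2))
          (mul_nonneg hu ht), hP₂.1, hP₂.2,
        mul_nonneg (mul_nonneg (mul_nonneg hc.le hu) ht) (sub_nonneg.mpr hP₂.2)]
    linarith
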